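/- Let λ, e₁, e₂, π ∈ ℝ and consider the infimum ρ of g(z₁,z₂) = λz₁z₂ + ½z₂² + e₁z₁ + e₂z₂ over all (z₁,z₂) ∈ ℝ² with z₁z₂ ≤ π. If (λ ≤ 0, e₁ = 0 and e₂ ≠ 0), or (λ = 0, e₁ = 0, e₂ = 0 and π ≥ 0), or (λ < 0, e₁ = 0, e₂ = 0 and π = 0), then ρ = λπ − ½e₂² and the infimum is attained, i.e., there exists (z₁,z₂) with z₁z₂ ≤ π and g(z₁,z₂) = λπ − ½e₂². -/

import Mathlib

/-- Theorem 2.5, cases 1 (attainable infimum) of Jiang–Li–Wu: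
for `g(z₁,z₂) = λ z₁ z₂ + ½ z₂² + e₁ z₁ + e₂ z₂` over `{z₁ z₂ ≤ π}`,
in the listed cases the infimum is `λπ − ½e₂²` and it is attained. -/
theorem stmt_6 (lam e₁ e₂ p : ℝ)
    (hcase : (lam ≤ 0 ∧ e₁ = 0 ∧ e₂ ≠ 0) ∨ (lam = 0 ∧ e₁ = 0 ∧ e₂ = 0 ∧ 0 ≤ p) ∨
      (lam < 0 ∧ e₁ = 0 ∧ e₂ = 0 ∧ p = 0)) :
    (∀ z₁ z₂ : ℝ, z₁ * z₂ ≤ p →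
      lam * p - (1/2) * e₂ ^ 2 ≤ lam * (z₁ * z₂) + (1/2) * z₂ ^ 2 + e₁ * z₁ + e₂ * z₂) ∧
    (∃ z₁ z₂ : ℝ, z₁ * z₂ ≤ p ∧
      lam * (z₁ * z₂) + (1/2) * z₂ ^ 2 + e₁ * z₁ + e₂ * z₂ = lam * p - (1/2) * e₂ ^ 2) := by
  rcases hcase with ⟨hl, h1, h2⟩ | ⟨hl, h1, h2, hp⟩ | ⟨hl, h1, h2, hp⟩
  · subst h1
    constructor
    · intro z₁ z₂ hz
      have := mul_le_mul_of_nonpos_left hz hl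
      nlinarith [sq_nonneg (z₂ + e₂)]
    · refine ⟨-p / e₂, -e₂, ?_, ?_⟩ <;>
        field_simp <;> nlinarith [sq_nonneg e₂]
  · subst hl h1 h2
    constructor
    · intro z₁ z₂ hz; nlinarith [sq_nonneg z₂]
    · exact ⟨0, 0, by simpa using hp, by ring⟩
  · subst h1 h2 hp
    constructor
    · intro z₁ z₂ hz
      nlinarith [sq_nonneg z₂, mul_le_mul_of_nonpos_left hz hl.le]
    · exact ⟨0, 0, by simp, by ring⟩
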